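/- Upper bound (Lemma 3.1 / Lemma B.1, Case 4): Let C_Z ≥ 1 and C_β > 0. For every n ≥ 2, every d ≥ 1, every β ∈ ℝ^d with ‖β‖₂ ≤ C_β, and every pair of neighbouring survival datasets D, D' of size n that both satisfy the covariate bound C_Z, one has ‖ℓ̇(β; D) − ℓ̇(β; D')‖₂ ≤ (4 C_Z + 6 C_Z e^{4 C_Z C_β} log(n+1)) / n. Lower bound: there exists a constant c > 0 depending only on C_Z and C_β such that for every n ≥ 2 and every d ≥ 1 there exist a pair of neighbouring survival datasets D, D' of size n satisfying the covariate bound C_Z and a vector β with ‖β‖₂ ≤ C_β for which ‖ℓ̇(β; D) − ℓ̇(β; D')‖₂ ≥ c log(n)/n. Hence the ℓ₂-sensitivity of the Cox score over such datasets is of exact order log(n)/n. -/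

import Mathlib

open scoped BigOperators
open MeasureTheory Real
open scoped RealInnerProductSpace
noncomputable section

open Finset in

lemma sum_inv_reflect (n : ℕ) :
    ∑ k ∈ range n, ((n - k : ℕ) : ℝ)⁻¹ = ∑ k ∈ range n, ((k : ℝ) + 1)⁻¹ := by
  rw [← Finset.sum_range_reflect (fun j => ((n - j : ℕ) : ℝ)⁻¹) n]
  refine Finset.sum_congr rfl fun j hj => ?_
  rw [Finset.mem_range] at hj
  have : n - (n - 1 - j) = j + 1 := by omega
  rw [this]
  push_cast
  ring_nf

open Finset in
lemma harmonic_le_log (n : ℕ) (hn : 2 ≤ n) :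
    ∑ k ∈ range n, ((k : ℝ) + 1)⁻¹ ≤ 3 / 2 * Real.log (n + 1) := by
  induction n, hn using Nat.le_induction with
  | base =>
    have h3 : (1 : ℝ) ≤ Real.log 3 := by
      rw [Real.le_log_iff_exp_le (by norm_num)]
      have := Real.exp_one_lt_d9
      linarith
    simp only [Finset.sum_range_succ, Finset.sum_range_zero]
    have : ((2 : ℕ) : ℝ) + 1 = 3 := by norm_num
    rw [this]
    norm_num
    linarith
  | succ n hn ih =>
    rw [Finset.sum_range_succ]
    have hpos : (0 : ℝ) < (n + 1) / (n + 2) := by positivity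
    have hlog := Real.log_le_sub_one_of_pos hpos
    rw [Real.log_div (by positivity) (by positivity)] at hlog
    have hkey : ((n : ℝ) + 2)⁻¹ ≤ Real.log (n + 2) - Real.log (n + 1) := by
      have h : ((n : ℝ) + 1) / ((n : ℝ) + 2) - 1 = -((n : ℝ) + 2)⁻¹ := by
        field_simp
        norm_num
      linarith [hlog, h.le]
    have h2 : ((n : ℝ) + 1)⁻¹ ≤ 3 / 2 * ((n : ℝ) + 2)⁻¹ := by
      have hn1 : (2 : ℝ) ≤ (n : ℝ) := by exact_mod_cast hn
      rw [show (3 : ℝ) / 2 * ((n : ℝ) + 2)⁻¹ = (3 / 2) / ((n : ℝ) + 2) from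
        (div_eq_mul_inv _ _).symm, inv_eq_one_div,
        div_le_div_iff₀ (by positivity) (by positivity)]
      nlinarith
    push_cast
    rw [show (n : ℝ) + 1 + 1 = (n : ℝ) + 2 from by ring]
    linarith [ih]

open Finset in
lemma log_le_three_harmonic (n : ℕ) (hn : 2 ≤ n) :
    Real.log n ≤ 3 * (∑ k ∈ range n, ((k : ℝ) + 1)⁻¹ - 1) := by
  induction n, hn using Nat.le_induction with
  | base =>
    simp only [Finset.sum_range_succ, Finset.sum_range_zero]
    have h2 := Real.log_two_lt_d9
    have : ((2 : ℕ) : ℝ) = 2 := by norm_num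
    rw [this]
    norm_num
    linarith
  | succ n hn ih =>
    rw [Finset.sum_range_succ]
    have hn1 : (2 : ℝ) ≤ (n : ℝ) := by exact_mod_cast hn
    have hpos : (0 : ℝ) < ((n : ℝ) + 1) / n := by positivity
    have hlog := Real.log_le_sub_one_of_pos hpos
    rw [Real.log_div (by positivity) (by positivity)] at hlog
    have h1 : Real.log ((n : ℝ) + 1) ≤ Real.log n + ((n : ℝ))⁻¹ := by
      have h : ((n : ℝ) + 1) / n - 1 = ((n : ℝ))⁻¹ := by field_simp; ring
      linarith [hlog, h.le]
    have h2 : ((n : ℝ))⁻¹ ≤ 3 * ((n : ℝ) + 1)⁻¹ := by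
      rw [show (3 : ℝ) * ((n : ℝ) + 1)⁻¹ = 3 / ((n : ℝ) + 1) from
        (div_eq_mul_inv _ _).symm, inv_eq_one_div,
        div_le_div_iff₀ (by positivity) (by positivity)]
      nlinarith
    push_cast
    linarith [ih]

open Finset in
lemma sum_inv_riskset_le {n : ℕ} (T : Fin n → ℝ) :
    ∑ i, ((Finset.univ.filter (fun j => T i ≤ T j)).card : ℝ)⁻¹ ≤
      ∑ k ∈ range n, ((k : ℝ) + 1)⁻¹ := by
  classical
  set σ := Tuple.sort T with hσ
  have hmono := Tuple.monotone_sort T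
  rw [← Equiv.sum_comp σ (fun i => ((Finset.univ.filter (fun j => T i ≤ T j)).card : ℝ)⁻¹)]
  have hbound : ∀ k : Fin n,
      (n - (k : ℕ)) ≤ (Finset.univ.filter (fun j => T (σ k) ≤ T j)).card := by
    intro k
    have hsub : (Finset.Ici k).image σ ⊆ Finset.univ.filter (fun j => T (σ k) ≤ T j) := by
      intro j hj
      simp only [Finset.mem_image, Finset.mem_Ici] at hj
      obtain ⟨l, hl, rfl⟩ := hj
      simp only [Finset.mem_filter, Finset.mem_univ, true_and]
      exact hmono hl
    have := Finset.card_le_card hsub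
    rwa [Finset.card_image_of_injective _ σ.injective, Fin.card_Ici] at this
  calc ∑ k : Fin n, ((Finset.univ.filter (fun j => T (σ k) ≤ T j)).card : ℝ)⁻¹
      ≤ ∑ k : Fin n, ((n - (k : ℕ) : ℕ) : ℝ)⁻¹ := by
        refine Finset.sum_le_sum fun k _ => ?_
        have hk : 0 < n - (k : ℕ) := by omega
        exact inv_anti₀ (by exact_mod_cast hk) (by exact_mod_cast hbound k)
    _ = ∑ k ∈ range n, ((n - k : ℕ) : ℝ)⁻¹ :=
        Fin.sum_univ_eq_sum_range (fun m => ((n - m : ℕ) : ℝ)⁻¹) n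
    _ = ∑ k ∈ range n, ((k : ℝ) + 1)⁻¹ := sum_inv_reflect n

structure SurvData (n d : ℕ) where
  T : Fin n → ℝ
  Δ : Fin n → Bool
  Z : Fin n → ℝ → EuclideanSpace ℝ (Fin d)

namespace SurvData

variable {n d : ℕ}

/-- Observed times lie in `[0,1]`. -/
def valid (D : SurvData n d) : Prop := ∀ i, D.T i ∈ Set.Icc (0 : ℝ) 1

/-- Covariate bound: `‖Z_i(t)‖₂ ≤ C_Z` for all `i` and all `t ∈ [0,1]`. -/
def covBound (D : SurvData n d) (CZ : ℝ) : Prop :=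
  ∀ i, ∀ t ∈ Set.Icc (0 : ℝ) 1, ‖D.Z i t‖ ≤ CZ

def S0 (D : SurvData n d) (β : EuclideanSpace ℝ (Fin d)) (t : ℝ) : ℝ :=
  (n : ℝ)⁻¹ * ∑ j, if t ≤ D.T j then Real.exp ⟪β, D.Z j t⟫ else 0

def S1 (D : SurvData n d) (β : EuclideanSpace ℝ (Fin d)) (t : ℝ) :
    EuclideanSpace ℝ (Fin d) :=
  (n : ℝ)⁻¹ • ∑ j, if t ≤ D.T j then Real.exp ⟪β, D.Z j t⟫ • D.Z j t else 0

def Zbar (D : SurvData n d) (β : EuclideanSpace ℝ (Fin d)) (t : ℝ) :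
    EuclideanSpace ℝ (Fin d) :=
  (D.S0 β t)⁻¹ • D.S1 β t

/-- The Cox partial-likelihood score `ℓ̇(β; D)`. -/
def score (D : SurvData n d) (β : EuclideanSpace ℝ (Fin d)) :
    EuclideanSpace ℝ (Fin d) :=
  (n : ℝ)⁻¹ • ∑ i, if D.Δ i then D.Z i (D.T i) - D.Zbar β (D.T i) else 0

/-- Neighbouring datasets: they differ in at most one triple. -/
def Neighbor (D D' : SurvData n d) : Prop :=
  ∃ i0 : Fin n, ∀ i, i ≠ i0 → D.T i = D'.T i ∧ D.Δ i = D'.Δ i ∧ D.Z i = D'.Z i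

-- ### auxiliary lemmas

lemma inner_le_of_bounds {CZ Cβ : ℝ} {β z : EuclideanSpace ℝ (Fin d)}
    (hβ : ‖β‖ ≤ Cβ) (hz : ‖z‖ ≤ CZ) : |⟪β, z⟫| ≤ CZ * Cβ := by
  calc |⟪β, z⟫| ≤ ‖β‖ * ‖z‖ := abs_real_inner_le_norm β z
    _ ≤ Cβ * CZ := mul_le_mul hβ hz (norm_nonneg _) ((norm_nonneg _).trans hβ)
    _ = CZ * Cβ := mul_comm _ _

lemma S0_nonneg (D : SurvData n d) (β : EuclideanSpace ℝ (Fin d)) (t : ℝ) :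
    0 ≤ D.S0 β t := by
  apply mul_nonneg (by positivity)
  apply Finset.sum_nonneg
  intro j _
  split <;> positivity

lemma norm_S1_le {CZ : ℝ} (D : SurvData n d) (β : EuclideanSpace ℝ (Fin d)) {t : ℝ}
    (hCZ : 0 ≤ CZ) (hZ : D.covBound CZ) (ht : t ∈ Set.Icc (0 : ℝ) 1) :
    ‖D.S1 β t‖ ≤ CZ * D.S0 β t := by
  have key : ‖∑ j, if t ≤ D.T j then Real.exp ⟪β, D.Z j t⟫ • D.Z j t else 0‖ ≤
      (∑ j, if t ≤ D.T j then Real.exp ⟪β, D.Z j t⟫ else 0) * CZ := by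
    calc ‖∑ j, if t ≤ D.T j then Real.exp ⟪β, D.Z j t⟫ • D.Z j t else 0‖
        ≤ ∑ j, ‖if t ≤ D.T j then Real.exp ⟪β, D.Z j t⟫ • D.Z j t else
            (0 : EuclideanSpace ℝ (Fin d))‖ := norm_sum_le _ _
      _ ≤ ∑ j, (if t ≤ D.T j then Real.exp ⟪β, D.Z j t⟫ else 0) * CZ := by
          refine Finset.sum_le_sum fun j _ => ?_
          split
          · rw [norm_smul, Real.norm_eq_abs, abs_of_pos (Real.exp_pos _)]
            exact mul_le_mul_of_nonneg_left (hZ j t ht) (Real.exp_pos _).le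
          · simp
      _ = (∑ j, if t ≤ D.T j then Real.exp ⟪β, D.Z j t⟫ else 0) * CZ := by
          rw [Finset.sum_mul]
  rw [S1, S0, norm_smul, norm_inv, Real.norm_natCast]
  calc ((n : ℝ))⁻¹ * ‖∑ j, if t ≤ D.T j then Real.exp ⟪β, D.Z j t⟫ • D.Z j t else 0‖
      ≤ ((n : ℝ))⁻¹ * ((∑ j, if t ≤ D.T j then Real.exp ⟪β, D.Z j t⟫ else 0) * CZ) :=
        mul_le_mul_of_nonneg_left key (by positivity)
    _ = CZ * ((n : ℝ)⁻¹ * ∑ j, if t ≤ D.T j then Real.exp ⟪β, D.Z j t⟫ else 0) := by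
        ring

lemma norm_Zbar_le {CZ : ℝ} (D : SurvData n d) (β : EuclideanSpace ℝ (Fin d)) {t : ℝ}
    (hCZ : 0 ≤ CZ) (hZ : D.covBound CZ) (ht : t ∈ Set.Icc (0 : ℝ) 1) :
    ‖D.Zbar β t‖ ≤ CZ := by
  rw [Zbar, norm_smul, norm_inv, Real.norm_eq_abs, abs_of_nonneg (D.S0_nonneg β t)]
  rcases eq_or_lt_of_le (D.S0_nonneg β t) with h | h
  · rw [← h]; simpa using hCZ
  · have h1 : (D.S0 β t)⁻¹ * ‖D.S1 β t‖ ≤ (D.S0 β t)⁻¹ * (CZ * D.S0 β t) :=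
      mul_le_mul_of_nonneg_left (D.norm_S1_le β hCZ hZ ht) (inv_nonneg.mpr h.le)
    have h2 : (D.S0 β t)⁻¹ * (CZ * D.S0 β t) = CZ := by
      field_simp
    linarith

lemma S0_pos (D : SurvData n d) (β : EuclideanSpace ℝ (Fin d)) {t : ℝ}
    (hn : 0 < n) (hex : ∃ j, t ≤ D.T j) :
    0 < D.S0 β t := by
  obtain ⟨j, hj⟩ := hex
  apply mul_pos (by positivity)
  refine Finset.sum_pos' (fun i _ => by split <;> positivity) ⟨j, Finset.mem_univ j, ?_⟩
  rw [if_pos hj]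
  exact Real.exp_pos _

lemma S0_ge {CZ Cβ : ℝ} (D : SurvData n d) {β : EuclideanSpace ℝ (Fin d)} {t : ℝ}
    (hβ : ‖β‖ ≤ Cβ) (hZ : D.covBound CZ) (ht : t ∈ Set.Icc (0 : ℝ) 1) :
    Real.exp (-(CZ * Cβ)) * ((Finset.univ.filter (fun j => t ≤ D.T j)).card : ℝ) / n
      ≤ D.S0 β t := by
  have key : Real.exp (-(CZ * Cβ)) * ((Finset.univ.filter (fun j => t ≤ D.T j)).card : ℝ)
      ≤ ∑ j, if t ≤ D.T j then Real.exp ⟪β, D.Z j t⟫ else 0 := by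
    calc Real.exp (-(CZ * Cβ)) * ((Finset.univ.filter (fun j => t ≤ D.T j)).card : ℝ)
        = ∑ j, if t ≤ D.T j then Real.exp (-(CZ * Cβ)) else 0 := by
          rw [Finset.sum_ite, Finset.sum_const, Finset.sum_const_zero, add_zero,
            nsmul_eq_mul, mul_comm]
      _ ≤ ∑ j, if t ≤ D.T j then Real.exp ⟪β, D.Z j t⟫ else 0 := by
          refine Finset.sum_le_sum fun j _ => ?_
          split
          · apply Real.exp_le_exp.mpr
            have := inner_le_of_bounds (CZ := CZ) (Cβ := Cβ) hβ (hZ j t ht)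
            rw [abs_le] at this
            linarith [this.1]
          · exact le_refl 0
  rw [S0, div_eq_inv_mul]
  exact mul_le_mul_of_nonneg_left key (by positivity)

lemma exp_term_le {CZ Cβ : ℝ} (D : SurvData n d) {β : EuclideanSpace ℝ (Fin d)} {t : ℝ} (j : Fin n)
    (hβ : ‖β‖ ≤ Cβ) (hZ : D.covBound CZ) (ht : t ∈ Set.Icc (0 : ℝ) 1) :
    (if t ≤ D.T j then Real.exp ⟪β, D.Z j t⟫ else 0) ≤ Real.exp (CZ * Cβ) := by
  split
  · apply Real.exp_le_exp.mpr
    have := inner_le_of_bounds (CZ := CZ) (Cβ := Cβ) hβ (hZ j t ht)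
    rw [abs_le] at this
    linarith [this.2]
  · positivity

lemma S0_diff_le {CZ Cβ : ℝ} (D D' : SurvData n d) {β : EuclideanSpace ℝ (Fin d)} {t : ℝ}
    {i0 : Fin n} (hnb : ∀ i, i ≠ i0 → D.T i = D'.T i ∧ D.Δ i = D'.Δ i ∧ D.Z i = D'.Z i)
    (hβ : ‖β‖ ≤ Cβ) (hZ : D.covBound CZ) (hZ' : D'.covBound CZ) (ht : t ∈ Set.Icc (0 : ℝ) 1) :
    |D.S0 β t - D'.S0 β t| ≤ 2 * Real.exp (CZ * Cβ) / n := by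
  have hsplit : D.S0 β t - D'.S0 β t = (n : ℝ)⁻¹ *
      ((if t ≤ D.T i0 then Real.exp ⟪β, D.Z i0 t⟫ else 0)
        - (if t ≤ D'.T i0 then Real.exp ⟪β, D'.Z i0 t⟫ else 0)) := by
    rw [S0, S0, ← mul_sub, ← Finset.sum_sub_distrib]
    congr 1
    rw [Finset.sum_eq_single i0]
    · intro i _ hi
      obtain ⟨h1, _, h3⟩ := hnb i hi
      rw [h1, h3, sub_self]
    · intro h
      exact absurd (Finset.mem_univ i0) h
  rw [hsplit, abs_mul, abs_of_nonneg (by positivity : (0:ℝ) ≤ ((n : ℝ))⁻¹),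
    div_eq_mul_inv, mul_comm (2 * Real.exp (CZ * Cβ))]
  gcongr ((n:ℝ))⁻¹ * ?_
  have hb1 := D.exp_term_le i0 hβ hZ ht
  have hb1' : (0:ℝ) ≤ if t ≤ D.T i0 then Real.exp ⟪β, D.Z i0 t⟫ else 0 := by
    split <;> positivity
  have hb2 := D'.exp_term_le i0 hβ hZ' ht
  have hb2' : (0:ℝ) ≤ if t ≤ D'.T i0 then Real.exp ⟪β, D'.Z i0 t⟫ else 0 := by
    split <;> positivity
  rw [abs_sub_le_iff]
  constructor <;> linarith

lemma S1_diff_le {CZ Cβ : ℝ} (D D' : SurvData n d) {β : EuclideanSpace ℝ (Fin d)} {t : ℝ}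
    {i0 : Fin n} (hnb : ∀ i, i ≠ i0 → D.T i = D'.T i ∧ D.Δ i = D'.Δ i ∧ D.Z i = D'.Z i)
    (hCZ : 0 ≤ CZ)
    (hβ : ‖β‖ ≤ Cβ) (hZ : D.covBound CZ) (hZ' : D'.covBound CZ) (ht : t ∈ Set.Icc (0 : ℝ) 1) :
    ‖D.S1 β t - D'.S1 β t‖ ≤ 2 * CZ * Real.exp (CZ * Cβ) / n := by
  have hsplit : D.S1 β t - D'.S1 β t = (n : ℝ)⁻¹ •
      ((if t ≤ D.T i0 then Real.exp ⟪β, D.Z i0 t⟫ • D.Z i0 t else 0)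
        - (if t ≤ D'.T i0 then Real.exp ⟪β, D'.Z i0 t⟫ • D'.Z i0 t else 0)) := by
    rw [S1, S1, ← smul_sub, ← Finset.sum_sub_distrib]
    congr 1
    rw [Finset.sum_eq_single i0]
    · intro i _ hi
      obtain ⟨h1, _, h3⟩ := hnb i hi
      rw [h1, h3, sub_self]
    · intro h
      exact absurd (Finset.mem_univ i0) h
  have hterm : ∀ (E : SurvData n d), E.covBound CZ →
      ‖if t ≤ E.T i0 then Real.exp ⟪β, E.Z i0 t⟫ • E.Z i0 t else (0 : EuclideanSpace ℝ (Fin d))‖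
        ≤ CZ * Real.exp (CZ * Cβ) := by
    intro E hZE
    split
    · rw [norm_smul, Real.norm_eq_abs, abs_of_pos (Real.exp_pos _)]
      have h1 : Real.exp ⟪β, E.Z i0 t⟫ ≤ Real.exp (CZ * Cβ) := by
        apply Real.exp_le_exp.mpr
        have := inner_le_of_bounds (CZ := CZ) (Cβ := Cβ) hβ (hZE i0 t ht)
        rw [abs_le] at this
        linarith [this.2]
      calc Real.exp ⟪β, E.Z i0 t⟫ * ‖E.Z i0 t‖ ≤ Real.exp (CZ * Cβ) * CZ :=
            mul_le_mul h1 (hZE i0 t ht) (norm_nonneg _) (Real.exp_pos _).le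
        _ = CZ * Real.exp (CZ * Cβ) := mul_comm _ _
    · simpa using by positivity
  rw [hsplit, norm_smul, norm_inv, Real.norm_natCast, div_eq_mul_inv,
    mul_comm (2 * CZ * Real.exp (CZ * Cβ))]
  gcongr ((n:ℝ))⁻¹ * ?_
  calc ‖_ - _‖ ≤ _ + _ := norm_sub_le _ _
    _ ≤ CZ * Real.exp (CZ * Cβ) + CZ * Real.exp (CZ * Cβ) :=
        add_le_add (hterm D hZ) (hterm D' hZ')
    _ = 2 * CZ * Real.exp (CZ * Cβ) := by ring

lemma Zbar_diff_le {CZ Cβ : ℝ} (D D' : SurvData n d) {β : EuclideanSpace ℝ (Fin d)} {t : ℝ}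
    {i0 : Fin n} (hn : 0 < n) (hCZ : 0 ≤ CZ)
    (hnb : ∀ i, i ≠ i0 → D.T i = D'.T i ∧ D.Δ i = D'.Δ i ∧ D.Z i = D'.Z i)
    (hβ : ‖β‖ ≤ Cβ) (hZ : D.covBound CZ) (hZ' : D'.covBound CZ) (ht : t ∈ Set.Icc (0 : ℝ) 1)
    (hex : ∃ j, t ≤ D.T j) (hex' : ∃ j, t ≤ D'.T j) :
    ‖D.Zbar β t - D'.Zbar β t‖ ≤ 4 * CZ * Real.exp (2 * (CZ * Cβ)) /
      ((Finset.univ.filter (fun j => t ≤ D.T j)).card : ℝ) := by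
  set E := Real.exp (CZ * Cβ) with hE_def
  have hE : 0 < E := Real.exp_pos _
  have hS0 : 0 < D.S0 β t := D.S0_pos β hn hex
  have hS0' : 0 < D'.S0 β t := D'.S0_pos β hn hex'
  obtain ⟨j0, hj0⟩ := hex
  have hN : (0 : ℝ) < ((Finset.univ.filter (fun j => t ≤ D.T j)).card : ℝ) := by
    have : j0 ∈ Finset.univ.filter (fun j => t ≤ D.T j) := by
      simp [hj0]
    have := Finset.card_pos.mpr ⟨j0, this⟩
    exact_mod_cast this
  have hS0ge : E⁻¹ * ((Finset.univ.filter (fun j => t ≤ D.T j)).card : ℝ) / n ≤ D.S0 β t := by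
    have := D.S0_ge (CZ := CZ) (Cβ := Cβ) hβ hZ ht
    rwa [Real.exp_neg] at this
  have hdec : D.Zbar β t - D'.Zbar β t = (D.S0 β t)⁻¹ • (D.S1 β t - D'.S1 β t)
      + ((D.S0 β t)⁻¹ - (D'.S0 β t)⁻¹) • D'.S1 β t := by
    rw [Zbar, Zbar]
    module
  have hA : ‖(D.S0 β t)⁻¹ • (D.S1 β t - D'.S1 β t)‖ ≤ (D.S0 β t)⁻¹ * (2 * CZ * E / n) := by
    rw [norm_smul, Real.norm_eq_abs, abs_of_pos (inv_pos.mpr hS0)]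
    exact mul_le_mul_of_nonneg_left (D.S1_diff_le D' hnb hCZ hβ hZ hZ' ht)
      (inv_pos.mpr hS0).le
  have hB : ‖((D.S0 β t)⁻¹ - (D'.S0 β t)⁻¹) • D'.S1 β t‖ ≤ CZ * (2 * E / n) / D.S0 β t := by
    have hinv : (D.S0 β t)⁻¹ - (D'.S0 β t)⁻¹ = (D'.S0 β t - D.S0 β t) /
        (D.S0 β t * D'.S0 β t) := by
      field_simp
    rw [norm_smul, Real.norm_eq_abs, hinv, abs_div,
      abs_of_pos (mul_pos hS0 hS0')]
    have hd1 : |D'.S0 β t - D.S0 β t| ≤ 2 * E / n := by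
      have := D.S0_diff_le D' hnb hβ hZ hZ' ht
      rw [abs_sub_comm]
      exact this
    have hd2 : ‖D'.S1 β t‖ ≤ CZ * D'.S0 β t := D'.norm_S1_le β hCZ hZ' ht
    calc |D'.S0 β t - D.S0 β t| / (D.S0 β t * D'.S0 β t) * ‖D'.S1 β t‖
        ≤ (2 * E / n) / (D.S0 β t * D'.S0 β t) * (CZ * D'.S0 β t) := by
          refine mul_le_mul (div_le_div_of_nonneg_right hd1 (mul_pos hS0 hS0').le)
            hd2 (norm_nonneg _)
            (div_nonneg (by positivity) (mul_pos hS0 hS0').le)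
      _ = CZ * (2 * E / n) / D.S0 β t := by
          field_simp
  have hsum : ‖D.Zbar β t - D'.Zbar β t‖ ≤ (4 * CZ * E / n) / D.S0 β t := by
    calc ‖D.Zbar β t - D'.Zbar β t‖
        ≤ ‖(D.S0 β t)⁻¹ • (D.S1 β t - D'.S1 β t)‖
          + ‖((D.S0 β t)⁻¹ - (D'.S0 β t)⁻¹) • D'.S1 β t‖ := by
          rw [hdec]; exact norm_add_le _ _
      _ ≤ (D.S0 β t)⁻¹ * (2 * CZ * E / n) + CZ * (2 * E / n) / D.S0 β t :=
          add_le_add hA hB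
      _ = (4 * CZ * E / n) / D.S0 β t := by
          field_simp
          ring
  refine hsum.trans ?_
  have hE2 : Real.exp (2 * (CZ * Cβ)) = E * E := by
    rw [two_mul, Real.exp_add]
  rw [hE2, div_le_div_iff₀ hS0 hN]
  have h2 : 4 * CZ * (E * E) * (E⁻¹ * ((Finset.univ.filter (fun j => t ≤ D.T j)).card : ℝ) / n)
      ≤ 4 * CZ * (E * E) * D.S0 β t :=
    mul_le_mul_of_nonneg_left hS0ge
      (mul_nonneg (by linarith : (0:ℝ) ≤ 4 * CZ) (mul_nonneg hE.le hE.le))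
  have h1 : 4 * CZ * (E * E) * (E⁻¹ * ((Finset.univ.filter (fun j => t ≤ D.T j)).card : ℝ) / n)
      = 4 * CZ * E / n * ((Finset.univ.filter (fun j => t ≤ D.T j)).card : ℝ) := by
    field_simp
  linarith

lemma score_term_le {CZ : ℝ} (D : SurvData n d) (β : EuclideanSpace ℝ (Fin d))
    (hCZ : 0 ≤ CZ) (hv : D.valid) (hZ : D.covBound CZ) (i : Fin n) :
    ‖(if D.Δ i then D.Z i (D.T i) - D.Zbar β (D.T i) else 0 :
        EuclideanSpace ℝ (Fin d))‖ ≤ 2 * CZ := by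
  split
  · refine (norm_sub_le _ _).trans ?_
    have h1 := hZ i _ (hv i)
    have h2 := D.norm_Zbar_le β hCZ hZ (hv i)
    linarith
  · simp only [norm_zero]
    linarith

lemma score_sensitivity_upper {CZ Cβ : ℝ} (hCZ : 1 ≤ CZ) (hCβ : 0 < Cβ)
    (hn : 2 ≤ n) (β : EuclideanSpace ℝ (Fin d)) (hβ : ‖β‖ ≤ Cβ)
    (D D' : SurvData n d) (hv : D.valid) (hv' : D'.valid)
    (hZ : D.covBound CZ) (hZ' : D'.covBound CZ) (hnbr : Neighbor D D') :
    ‖D.score β - D'.score β‖ ≤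
      (4 * CZ + 6 * CZ * Real.exp (4 * CZ * Cβ) * Real.log (n + 1)) / n := by
  classical
  obtain ⟨i0, hnb⟩ := hnbr
  have hCZ0 : (0 : ℝ) ≤ CZ := by linarith
  have hn0 : 0 < n := by omega
  set f : Fin n → EuclideanSpace ℝ (Fin d) :=
    fun i => if D.Δ i then D.Z i (D.T i) - D.Zbar β (D.T i) else 0 with hf
  set g : Fin n → EuclideanSpace ℝ (Fin d) :=
    fun i => if D'.Δ i then D'.Z i (D'.T i) - D'.Zbar β (D'.T i) else 0 with hg
  have hsplit : D.score β - D'.score β = (n : ℝ)⁻¹ • ∑ i, (f i - g i) := by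
    rw [score, score, ← smul_sub, ← Finset.sum_sub_distrib]
  set N : Fin n → ℝ := fun i => ((Finset.univ.filter (fun j => D.T i ≤ D.T j)).card : ℝ)
    with hN
  have hfg : ∀ i, i ≠ i0 → ‖f i - g i‖ ≤ 4 * CZ * Real.exp (2 * (CZ * Cβ)) / N i := by
    intro i hi
    obtain ⟨h1, h2, h3⟩ := hnb i hi
    have hgi : g i = if D.Δ i then D.Z i (D.T i) - D'.Zbar β (D.T i) else 0 := by
      rw [hg]
      simp only [← h1, ← h2, ← h3]
    rw [hgi, hf]
    simp only
    have hRHS : 0 ≤ 4 * CZ * Real.exp (2 * (CZ * Cβ)) / N i := by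
      apply div_nonneg _ (Nat.cast_nonneg _)
      positivity
    split
    · have heq : D.Z i (D.T i) - D.Zbar β (D.T i) -
          (D.Z i (D.T i) - D'.Zbar β (D.T i)) = -(D.Zbar β (D.T i) - D'.Zbar β (D.T i)) := by
        abel
      rw [heq, norm_neg]
      exact D.Zbar_diff_le D' hn0 hCZ0 hnb hβ hZ hZ' (hv i) ⟨i, le_refl _⟩
        ⟨i, (h1 ▸ le_refl _ : D.T i ≤ D'.T i)⟩
    · simpa using hRHS
  have hsum : ∑ i, ‖f i - g i‖ ≤ 4 * CZ + 6 * CZ * Real.exp (4 * CZ * Cβ) *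
      Real.log (n + 1) := by
    rw [← Finset.add_sum_erase _ _ (Finset.mem_univ i0)]
    have hterm0 : ‖f i0 - g i0‖ ≤ 4 * CZ := by
      refine (norm_sub_le _ _).trans ?_
      have := D.score_term_le β hCZ0 hv hZ i0
      have := D'.score_term_le β hCZ0 hv' hZ' i0
      rw [hf, hg]
      simp only
      linarith
    have hrest : ∑ i ∈ Finset.univ.erase i0, ‖f i - g i‖ ≤
        6 * CZ * Real.exp (4 * CZ * Cβ) * Real.log (n + 1) := by
      have step1 : ∑ i ∈ Finset.univ.erase i0, ‖f i - g i‖ ≤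
          ∑ i ∈ Finset.univ.erase i0, 4 * CZ * Real.exp (2 * (CZ * Cβ)) / N i := by
        refine Finset.sum_le_sum fun i hi => ?_
        exact hfg i (Finset.ne_of_mem_erase hi)
      have step2 : ∑ i ∈ Finset.univ.erase i0, 4 * CZ * Real.exp (2 * (CZ * Cβ)) / N i ≤
          ∑ i, 4 * CZ * Real.exp (2 * (CZ * Cβ)) / N i := by
        refine Finset.sum_le_sum_of_subset_of_nonneg (Finset.erase_subset _ _) ?_
        intro i _ _
        apply div_nonneg _ (Nat.cast_nonneg _)
        positivity
      have step3 : ∑ i, 4 * CZ * Real.exp (2 * (CZ * Cβ)) / N i =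
          4 * CZ * Real.exp (2 * (CZ * Cβ)) * ∑ i, (N i)⁻¹ := by
        rw [Finset.mul_sum]
        exact Finset.sum_congr rfl fun i _ => div_eq_mul_inv _ _
      have step4 : ∑ i, (N i)⁻¹ ≤ 3 / 2 * Real.log (n + 1) :=
        (sum_inv_riskset_le D.T).trans (harmonic_le_log n hn)
      have hlog : (0 : ℝ) ≤ Real.log (n + 1) := by
        apply Real.log_nonneg
        have : (1 : ℝ) ≤ (n : ℝ) := by exact_mod_cast hn0
        linarith
      have hexp : Real.exp (2 * (CZ * Cβ)) ≤ Real.exp (4 * CZ * Cβ) := by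
        apply Real.exp_le_exp.mpr
        nlinarith [mul_nonneg hCZ0 hCβ.le]
      calc ∑ i ∈ Finset.univ.erase i0, ‖f i - g i‖
          ≤ 4 * CZ * Real.exp (2 * (CZ * Cβ)) * ∑ i, (N i)⁻¹ := by
            rw [← step3]; exact step1.trans step2
        _ ≤ 4 * CZ * Real.exp (2 * (CZ * Cβ)) * (3 / 2 * Real.log (n + 1)) := by
            apply mul_le_mul_of_nonneg_left step4
            positivity
        _ = 6 * CZ * Real.exp (2 * (CZ * Cβ)) * Real.log (n + 1) := by ring
        _ ≤ 6 * CZ * Real.exp (4 * CZ * Cβ) * Real.log (n + 1) := by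
            apply mul_le_mul_of_nonneg_right _ hlog
            apply mul_le_mul_of_nonneg_left hexp
            linarith
    linarith
  rw [hsplit, norm_smul, norm_inv, Real.norm_natCast, div_eq_inv_mul]
  apply mul_le_mul_of_nonneg_left _ (by positivity)
  exact (norm_sum_le _ _).trans hsum

open Finset in
lemma score_sensitivity_lower {CZ Cβ : ℝ} (hCZ : 1 ≤ CZ) (hCβ : 0 < Cβ)
    (hn : 2 ≤ n) (hd : 1 ≤ d) :
    ∃ (β : EuclideanSpace ℝ (Fin d)) (D D' : SurvData n d),
      ‖β‖ ≤ Cβ ∧ D.valid ∧ D'.valid ∧ D.covBound CZ ∧ D'.covBound CZ ∧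
      SurvData.Neighbor D D' ∧
      (1/3 : ℝ) * Real.log n / n ≤ ‖D.score β - D'.score β‖ := by
  classical
  have hn0 : 0 < n := by omega
  have hnR : (0 : ℝ) < n := by exact_mod_cast hn0
  have hCZ0 : (0 : ℝ) ≤ CZ := by linarith
  set i0 : Fin n := ⟨n - 1, by omega⟩ with hi0_def
  set v : EuclideanSpace ℝ (Fin d) := EuclideanSpace.single ⟨0, by omega⟩ CZ with hv_def
  have hvnorm : ‖v‖ = CZ := by
    rw [hv_def, EuclideanSpace.norm_single, Real.norm_eq_abs, abs_of_nonneg hCZ0]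
  set Tf : Fin n → ℝ := fun i => ((i : ℕ) + 1) / n with hTf_def
  set D : SurvData n d := ⟨Tf, fun _ => true, fun _ _ => 0⟩ with hD_def
  set D' : SurvData n d := ⟨Tf, fun _ => true, fun i _ => if i = i0 then v else 0⟩
    with hD'_def
  have hTvalid : ∀ i : Fin n, Tf i ∈ Set.Icc (0 : ℝ) 1 := by
    intro i
    constructor
    · apply div_nonneg _ hnR.le
      positivity
    · rw [div_le_one hnR]
      have : (i : ℕ) + 1 ≤ n := i.isLt
      exact_mod_cast this
  have hTle : ∀ i : Fin n, Tf i ≤ Tf i0 := by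
    intro i
    have h0 : (i : ℕ) ≤ (i0 : ℕ) := by
      have := i.isLt
      simp only [hi0_def]
      omega
    have h1 : ((i : ℕ) : ℝ) + 1 ≤ ((i0 : ℕ) : ℝ) + 1 := by
      have := (Nat.cast_le (α := ℝ)).mpr h0
      linarith
    exact div_le_div_of_nonneg_right h1 hnR.le
  refine ⟨0, D, D', by simpa using hCβ.le, hTvalid, hTvalid, ?_, ?_, ?_, ?_⟩
  · intro i t _; simp [hD_def, hCZ0]
  · intro i t _
    simp only [hD'_def]
    split
    · rw [hvnorm]
    · simpa using hCZ0
  · exact ⟨i0, fun i hi => ⟨rfl, rfl, funext fun t => (if_neg hi).symm⟩⟩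
  · have hT'eq : D'.T = Tf := rfl
    have hscoreD : D.score 0 = 0 := by
      simp [hD_def, score, Zbar, S1]
    have hcard : ∀ i : Fin n, Finset.univ.filter (fun j => Tf i ≤ Tf j) = Finset.Ici i := by
      intro i
      ext j
      simp only [Finset.mem_filter, Finset.mem_univ, true_and, Finset.mem_Ici, hTf_def]
      rw [div_le_div_iff_of_pos_right hnR]
      constructor
      · intro h
        rw [Fin.le_def]
        exact_mod_cast (by linarith : ((i : ℕ) : ℝ) ≤ ((j : ℕ) : ℝ))
      · intro h
        have : ((i : ℕ) : ℝ) ≤ ((j : ℕ) : ℝ) := by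
          rw [Fin.le_def] at h
          exact_mod_cast h
        linarith
    have hS0' : ∀ i : Fin n, D'.S0 0 (Tf i) = (n : ℝ)⁻¹ * ((n - (i : ℕ) : ℕ) : ℝ) := by
      intro i
      rw [S0]
      congr 1
      have hterm : ∀ j : Fin n, (if Tf i ≤ D'.T j then
          Real.exp ⟪(0 : EuclideanSpace ℝ (Fin d)), D'.Z j (Tf i)⟫ else 0)
          = if Tf i ≤ Tf j then 1 else 0 := by
        intro j
        rw [hT'eq]
        simp [inner_zero_left]
      rw [Finset.sum_congr rfl (fun j _ => hterm j), Finset.sum_ite, Finset.sum_const,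
        Finset.sum_const_zero, add_zero, hcard i, Fin.card_Ici, nsmul_eq_mul, mul_one]
    have hS1' : ∀ i : Fin n, D'.S1 0 (Tf i) = (n : ℝ)⁻¹ • v := by
      intro i
      rw [S1]
      congr 1
      rw [Finset.sum_eq_single i0]
      · rw [hT'eq, if_pos (hTle i)]
        simp [hD'_def, inner_zero_left]
      · intro j _ hj
        simp [hD'_def, hj]
      · intro h
        exact absurd (Finset.mem_univ i0) h
    have hZbar' : ∀ i : Fin n, D'.Zbar 0 (Tf i) = (((n - (i : ℕ) : ℕ)) : ℝ)⁻¹ • v := by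
      intro i
      rw [Zbar, hS0' i, hS1' i, smul_smul]
      congr 1
      have hni : (0 : ℝ) < ((n - (i : ℕ) : ℕ) : ℝ) := by
        have : 0 < n - (i : ℕ) := by have := i.isLt; omega
        exact_mod_cast this
      field_simp
    have hscoreD' : D'.score 0 =
        ((n : ℝ)⁻¹ * (1 - ∑ k ∈ Finset.range n, ((k : ℝ) + 1)⁻¹)) • v := by
      have hterm : ∀ i : Fin n, (if D'.Δ i then D'.Z i (D'.T i) - D'.Zbar 0 (D'.T i) else 0)
          = (if i = i0 then v else 0) - (((n - (i : ℕ) : ℕ)) : ℝ)⁻¹ • v := by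
        intro i
        rw [if_pos (rfl : D'.Δ i = true)]
        show (if i = i0 then v else 0) - D'.Zbar 0 (Tf i) = _
        rw [hZbar' i]
      rw [score, Finset.sum_congr rfl (fun i _ => hterm i), Finset.sum_sub_distrib,
        Finset.sum_ite_eq' Finset.univ i0 (fun _ => v), if_pos (Finset.mem_univ i0),
        ← Finset.sum_smul, Fin.sum_univ_eq_sum_range (fun m => ((n - m : ℕ) : ℝ)⁻¹) n,
        sum_inv_reflect n]
      module
    rw [hscoreD, hscoreD', zero_sub, norm_neg, norm_smul, Real.norm_eq_abs, hvnorm]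
    set H := ∑ k ∈ Finset.range n, ((k : ℝ) + 1)⁻¹ with hH
    have hH32 : 3 / 2 ≤ H := by
      rw [hH]
      calc (3 : ℝ) / 2 = ∑ k ∈ Finset.range 2, ((k : ℝ) + 1)⁻¹ := by
            rw [Finset.sum_range_succ, Finset.sum_range_succ, Finset.sum_range_zero]
            norm_num
        _ ≤ _ := Finset.sum_le_sum_of_subset_of_nonneg (Finset.range_subset_range.mpr hn)
            (fun k _ _ => by positivity)
    have hlog3 : Real.log n ≤ 3 * (H - 1) := log_le_three_harmonic n hn
    have habs : |(n : ℝ)⁻¹ * (1 - H)| = (n : ℝ)⁻¹ * (H - 1) := by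
      rw [abs_mul, abs_of_nonneg (by positivity : (0 : ℝ) ≤ (n : ℝ)⁻¹),
        abs_of_nonpos (by linarith : (1 : ℝ) - H ≤ 0)]
      ring
    rw [habs]
    have hkey : (1 / 3 : ℝ) * Real.log n ≤ (H - 1) * CZ := by
      have h1 : (H - 1) * 1 ≤ (H - 1) * CZ :=
        mul_le_mul_of_nonneg_left hCZ (by linarith : (0 : ℝ) ≤ H - 1)
      linarith
    calc (1 / 3 : ℝ) * Real.log n / n ≤ ((H - 1) * CZ) / n :=
          div_le_div_of_nonneg_right hkey hnR.le
      _ = (n : ℝ)⁻¹ * (H - 1) * CZ := by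
          rw [div_eq_inv_mul, ← mul_assoc]

end SurvData

/-- Lemma 3.1 / Lemma B.1 (Case 4): the ℓ₂-sensitivity of the Cox partial-likelihood
score over neighbouring survival datasets with covariate bound `C_Z` and coefficient
bound `C_β` is of exact order `log n / n`: the upper bound
`(4 C_Z + 6 C_Z e^{4 C_Z C_β} log(n+1))/n` always holds, and there is a constant
`c > 0` (depending only on `C_Z, C_β`) such that a pair of neighbouring datasets
attains `c log n / n`. -/
theorem cox_score_sensitivity (CZ Cβ : ℝ) (hCZ : 1 ≤ CZ) (hCβ : 0 < Cβ) :
    (∀ (n d : ℕ), 2 ≤ n → 1 ≤ d → ∀ β : EuclideanSpace ℝ (Fin d), ‖β‖ ≤ Cβ →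
      ∀ D D' : SurvData n d, D.valid → D'.valid → D.covBound CZ → D'.covBound CZ →
        SurvData.Neighbor D D' →
        ‖D.score β - D'.score β‖ ≤
          (4 * CZ + 6 * CZ * Real.exp (4 * CZ * Cβ) * Real.log (n + 1)) / n) ∧
    (∃ c : ℝ, 0 < c ∧ ∀ (n d : ℕ), 2 ≤ n → 1 ≤ d →
      ∃ (β : EuclideanSpace ℝ (Fin d)) (D D' : SurvData n d),
        ‖β‖ ≤ Cβ ∧ D.valid ∧ D'.valid ∧ D.covBound CZ ∧ D'.covBound CZ ∧
        SurvData.Neighbor D D' ∧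
        c * Real.log n / n ≤ ‖D.score β - D'.score β‖) := by
  constructor
  · intro n d hn hd β hβ D D' hv hv' hZ hZ' hnbr
    exact SurvData.score_sensitivity_upper hCZ hCβ hn β hβ D D' hv hv' hZ hZ' hnbr
  · refine ⟨1/3, by norm_num, fun n d hn hd => ?_⟩
    obtain ⟨β, D, D', h1, h2, h3, h4, h5, h6, h7⟩ :=
      SurvData.score_sensitivity_lower hCZ hCβ hn hd
    exact ⟨β, D, D', h1, h2, h3, h4, h5, h6, h7⟩
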